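/- For every d ≥ 1 and every n ≥ 1, the odd-depth and even-depth squaring recurrences hold for general fragility number d: α_{2n−1}(d) = (α_{2n−2}(d))² and β_{2n}(d) = (β_{2n−1}(d))². -/

import Mathlib

open Filter Topology

/-- The golden ratio `φ = (√5 − 1)/2`. -/
noncomputable def phi : ℝ := (Real.sqrt 5 - 1) / 2

/-- Backward-induction value of the win-lose game of depth `n` on the complete binary tree:
`V_0(a) = a 0`; for `n ≥ 1`, the value is the `AND` of the values of the two depth-`(n−1)`
subtrees if `n` is odd (Player 2, the minimizer, moves) and the `OR` if `n` is even
(Player 1, the maximizer, moves).  Player 2 moves last. -/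
def gameValue : (n : ℕ) → (Fin (2 ^ n) → Bool) → Bool
  | 0, a => a 0
  | n + 1, a =>
      have h : 2 ^ (n + 1) = 2 ^ n + 2 ^ n := by rw [pow_succ]; omega
      let aL : Fin (2 ^ n) → Bool := fun i => a ⟨i.1, by have := i.2; omega⟩
      let aR : Fin (2 ^ n) → Bool := fun i => a ⟨i.1 + 2 ^ n, by have := i.2; omega⟩
      if (n + 1) % 2 = 1 then gameValue n aL && gameValue n aR
      else gameValue n aL || gameValue n aR

/-- `μ_{n,p}(S)`: the probability of a set `S` of depth-`n` games when the `2^n` payoffs are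
i.i.d. Bernoulli, each `true` with probability `p`. -/
noncomputable def prob (n : ℕ) (p : ℝ) (S : Set (Fin (2 ^ n) → Bool)) : ℝ :=
  ∑ a : Fin (2 ^ n) → Bool, S.indicator (fun a => ∏ i, if a i then p else 1 - p) a

/-- A game `a` of depth `n` is `d`-fragile if there is a game `a'` at Hamming distance at most
`d` from `a` whose value differs from that of `a`. -/
def Fragile (n d : ℕ) (a : Fin (2 ^ n) → Bool) : Prop :=
  ∃ a' : Fin (2 ^ n) → Bool, hammingDist a a' ≤ d ∧ gameValue n a' ≠ gameValue n a

/-- `F_n(d,p)`: the probability that a depth-`n` random game with parameter `p` is `d`-fragile. -/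
noncomputable def fragProb (n d : ℕ) (p : ℝ) : ℝ := prob n p {a | Fragile n d a}

/-- `α_n(d)`: conditional probability that a golden game of depth `n` is not `d`-fragile,
given that Player 1 wins it. -/
noncomputable def alpha (n d : ℕ) : ℝ :=
  prob n phi {a | ¬ Fragile n d a ∧ gameValue n a = true} /
    prob n phi {a | gameValue n a = true}

/-- `β_n(d)`: conditional probability that a golden game of depth `n` is not `d`-fragile,
given that Player 2 wins it. -/
noncomputable def beta (n d : ℕ) : ℝ :=
  prob n phi {a | ¬ Fragile n d a ∧ gameValue n a = false} /
    prob n phi {a | gameValue n a = false}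

-- auxiliary development

lemma pow_split (m : ℕ) : 2 ^ (m + 1) = 2 ^ m + 2 ^ m := by rw [pow_succ]; omega

def leftG (m : ℕ) (a : Fin (2 ^ (m + 1)) → Bool) : Fin (2 ^ m) → Bool :=
  fun i => a ⟨i.1, by have := i.2; have := pow_split m; omega⟩

def rightG (m : ℕ) (a : Fin (2 ^ (m + 1)) → Bool) : Fin (2 ^ m) → Bool :=
  fun i => a ⟨i.1 + 2 ^ m, by have := i.2; have := pow_split m; omega⟩

lemma gameValue_succ (m : ℕ) (a : Fin (2 ^ (m + 1)) → Bool) :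
    gameValue (m + 1) a =
      if (m + 1) % 2 = 1 then gameValue m (leftG m a) && gameValue m (rightG m a)
      else gameValue m (leftG m a) || gameValue m (rightG m a) := rfl

def glue (m : ℕ) (b c : Fin (2 ^ m) → Bool) : Fin (2 ^ (m + 1)) → Bool :=
  fun i => if h : i.1 < 2 ^ m then b ⟨i.1, h⟩
    else c ⟨i.1 - 2 ^ m, by have := i.2; have := pow_split m; omega⟩

lemma leftG_glue (m : ℕ) (b c : Fin (2 ^ m) → Bool) : leftG m (glue m b c) = b := by
  funext i
  simp [leftG, glue, i.2]

lemma rightG_glue (m : ℕ) (b c : Fin (2 ^ m) → Bool) : rightG m (glue m b c) = c := by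
  funext i
  simp only [rightG, glue]
  rw [dif_neg (by omega)]
  exact congrArg c (Fin.ext (by simp))

lemma glue_leftG_rightG (m : ℕ) (a : Fin (2 ^ (m + 1)) → Bool) :
    glue m (leftG m a) (rightG m a) = a := by
  funext i
  by_cases h : i.1 < 2 ^ m
  · simp only [glue, dif_pos h, leftG]
  · simp only [glue, dif_neg h, rightG]
    exact congrArg a (Fin.ext (show i.1 - 2 ^ m + 2 ^ m = i.1 by omega))

noncomputable def glueEquiv (m : ℕ) :
    ((Fin (2 ^ m) → Bool) × (Fin (2 ^ m) → Bool)) ≃ (Fin (2 ^ (m + 1)) → Bool) where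
  toFun p := glue m p.1 p.2
  invFun a := (leftG m a, rightG m a)
  left_inv p := by simp [leftG_glue, rightG_glue]
  right_inv a := glue_leftG_rightG m a

lemma prod_glue (m : ℕ) (w : Bool → ℝ) (b c : Fin (2 ^ m) → Bool) :
    ∏ i, w (glue m b c i) = (∏ i, w (b i)) * ∏ i, w (c i) := by
  rw [← (finCongr (pow_split m).symm).prod_comp (fun i => w (glue m b c i)),
    Fin.prod_univ_add]
  congr 1
  · refine Finset.prod_congr rfl fun i _ => ?_
    have h : ((finCongr (pow_split m).symm) (Fin.castAdd (2 ^ m) i)).1 = i.1 := rfl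
    simp only [glue]
    rw [dif_pos (h ▸ i.2)]
    exact congrArg w (congrArg b (Fin.ext h))
  · refine Finset.prod_congr rfl fun i _ => ?_
    have h : ((finCongr (pow_split m).symm) (Fin.natAdd (2 ^ m) i)).1 = 2 ^ m + i.1 := rfl
    simp only [glue]
    rw [dif_neg (by omega)]
    exact congrArg w (congrArg c (Fin.ext (by simp [h])))

lemma prob_glue (m : ℕ) (p : ℝ) (S T : Set (Fin (2 ^ m) → Bool)) :
    prob (m + 1) p {a | leftG m a ∈ S ∧ rightG m a ∈ T} = prob m p S * prob m p T := by
  classical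
  unfold prob
  rw [← (glueEquiv m).sum_comp, Fintype.sum_prod_type, Finset.sum_mul_sum]
  refine Finset.sum_congr rfl fun b _ => Finset.sum_congr rfl fun c _ => ?_
  have hg : (glueEquiv m) (b, c) = glue m b c := rfl
  rw [hg]
  have hmem : (glue m b c ∈ {a | leftG m a ∈ S ∧ rightG m a ∈ T}) ↔ (b ∈ S ∧ c ∈ T) := by
    simp [Set.mem_setOf_eq, leftG_glue, rightG_glue]
  simp only [Set.indicator_apply, hmem]
  rw [prod_glue m (fun x => if x = true then p else 1 - p)]
  by_cases hb : b ∈ S <;> by_cases hc : c ∈ T <;> simp [hb, hc]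

lemma hamming_leftG (m : ℕ) (a a' : Fin (2 ^ (m + 1)) → Bool) :
    hammingDist (leftG m a) (leftG m a') ≤ hammingDist a a' := by
  classical
  unfold hammingDist
  apply Finset.card_le_card_of_injOn
    (fun i => (⟨i.1, by have := i.2; have := pow_split m; omega⟩ : Fin (2 ^ (m + 1))))
  · intro i hi
    simp only [Finset.mem_coe, Finset.mem_filter, Finset.mem_univ, true_and] at hi ⊢
    exact hi
  · intro i _ j _ h
    have h' := congrArg Fin.val h
    exact Fin.ext h'

lemma hamming_rightG (m : ℕ) (a a' : Fin (2 ^ (m + 1)) → Bool) :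
    hammingDist (rightG m a) (rightG m a') ≤ hammingDist a a' := by
  classical
  unfold hammingDist
  apply Finset.card_le_card_of_injOn
    (fun i => (⟨i.1 + 2 ^ m, by have := i.2; have := pow_split m; omega⟩ : Fin (2 ^ (m + 1))))
  · intro i hi
    simp only [Finset.mem_coe, Finset.mem_filter, Finset.mem_univ, true_and] at hi ⊢
    exact hi
  · intro i _ j _ h
    have h' := congrArg Fin.val h
    have h'' : i.1 + 2 ^ m = j.1 + 2 ^ m := h'
    exact Fin.ext (by omega)

lemma hamming_glue_left (m : ℕ) (b b' c : Fin (2 ^ m) → Bool) :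
    hammingDist (glue m b c) (glue m b' c) ≤ hammingDist b b' := by
  classical
  have hpos : 0 < 2 ^ m := Nat.pow_pos (by norm_num)
  unfold hammingDist
  apply Finset.card_le_card_of_injOn
    (fun i => (⟨i.1 % 2 ^ m, Nat.mod_lt _ hpos⟩ : Fin (2 ^ m)))
  · intro i hi
    simp only [Finset.mem_coe, Finset.mem_filter, Finset.mem_univ, true_and] at hi ⊢
    have hlt : i.1 < 2 ^ m := by
      by_contra hc
      exact hi (by simp only [glue, dif_neg hc])
    intro hEq
    apply hi
    simp only [glue, dif_pos hlt]
    have e : (⟨i.1, hlt⟩ : Fin (2 ^ m)) = ⟨i.1 % 2 ^ m, Nat.mod_lt _ hpos⟩ :=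
      Fin.ext (Nat.mod_eq_of_lt hlt).symm
    rw [e]; exact hEq
  · intro i hi j hj h
    simp only [Finset.mem_coe, Finset.mem_filter, Finset.mem_univ, true_and] at hi hj
    have hli : i.1 < 2 ^ m := by
      by_contra hc; exact hi (by simp only [glue, dif_neg hc])
    have hlj : j.1 < 2 ^ m := by
      by_contra hc; exact hj (by simp only [glue, dif_neg hc])
    have h0 := congrArg Fin.val h
    have h' : i.1 % 2 ^ m = j.1 % 2 ^ m := h0
    exact Fin.ext (by rwa [Nat.mod_eq_of_lt hli, Nat.mod_eq_of_lt hlj] at h')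

lemma hamming_glue_right (m : ℕ) (b c c' : Fin (2 ^ m) → Bool) :
    hammingDist (glue m b c) (glue m b c') ≤ hammingDist c c' := by
  classical
  have hpos : 0 < 2 ^ m := Nat.pow_pos (by norm_num)
  unfold hammingDist
  apply Finset.card_le_card_of_injOn
    (fun i => (⟨(i.1 - 2 ^ m) % 2 ^ m, Nat.mod_lt _ hpos⟩ : Fin (2 ^ m)))
  · intro i hi
    simp only [Finset.mem_coe, Finset.mem_filter, Finset.mem_univ, true_and] at hi ⊢
    have hge : ¬ i.1 < 2 ^ m := by
      intro hc
      exact hi (by simp only [glue, dif_pos hc])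
    intro hEq
    apply hi
    simp only [glue, dif_neg hge]
    have e : (⟨i.1 - 2 ^ m, by have := i.2; have := pow_split m; omega⟩ : Fin (2 ^ m)) =
        ⟨(i.1 - 2 ^ m) % 2 ^ m, Nat.mod_lt _ hpos⟩ := by
      refine Fin.ext ?_
      have hlt : i.1 - 2 ^ m < 2 ^ m := by have := i.2; have := pow_split m; omega
      exact (Nat.mod_eq_of_lt hlt).symm
    rw [e]; exact hEq
  · intro i hi j hj h
    simp only [Finset.mem_coe, Finset.mem_filter, Finset.mem_univ, true_and] at hi hj
    have hgi : ¬ i.1 < 2 ^ m := by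
      intro hc; exact hi (by simp only [glue, dif_pos hc])
    have hgj : ¬ j.1 < 2 ^ m := by
      intro hc; exact hj (by simp only [glue, dif_pos hc])
    have hli : i.1 - 2 ^ m < 2 ^ m := by have := i.2; have := pow_split m; omega
    have hlj : j.1 - 2 ^ m < 2 ^ m := by have := j.2; have := pow_split m; omega
    have h0 := congrArg Fin.val h
    have h' : (i.1 - 2 ^ m) % 2 ^ m = (j.1 - 2 ^ m) % 2 ^ m := h0
    rw [Nat.mod_eq_of_lt hli, Nat.mod_eq_of_lt hlj] at h'
    exact Fin.ext (by omega)

lemma odd_case (m d : ℕ) (hm : (m + 1) % 2 = 1) (a : Fin (2 ^ (m + 1)) → Bool) :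
    (¬ Fragile (m + 1) d a ∧ gameValue (m + 1) a = true) ↔
      ((¬ Fragile m d (leftG m a) ∧ gameValue m (leftG m a) = true) ∧
        (¬ Fragile m d (rightG m a) ∧ gameValue m (rightG m a) = true)) := by
  have hval : ∀ x : Fin (2 ^ (m + 1)) → Bool,
      gameValue (m + 1) x = (gameValue m (leftG m x) && gameValue m (rightG m x)) := by
    intro x; rw [gameValue_succ, if_pos hm]
  constructor
  · rintro ⟨hnf, hv⟩
    rw [hval, Bool.and_eq_true] at hv
    refine ⟨⟨?_, hv.1⟩, ?_, hv.2⟩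
    · rintro ⟨b', hdist, hne⟩
      apply hnf
      refine ⟨glue m b' (rightG m a), ?_, ?_⟩
      · calc hammingDist a (glue m b' (rightG m a))
            = hammingDist (glue m (leftG m a) (rightG m a)) (glue m b' (rightG m a)) := by
              rw [glue_leftG_rightG]
          _ ≤ hammingDist (leftG m a) b' := hamming_glue_left m _ _ _
          _ ≤ d := hdist
      · rw [hval, hval, leftG_glue, rightG_glue]
        have hb' : gameValue m b' = false := by
          rw [hv.1] at hne; simpa using hne
        simp [hb', hv.1, hv.2]
    · rintro ⟨c', hdist, hne⟩
      apply hnf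
      refine ⟨glue m (leftG m a) c', ?_, ?_⟩
      · calc hammingDist a (glue m (leftG m a) c')
            = hammingDist (glue m (leftG m a) (rightG m a)) (glue m (leftG m a) c') := by
              rw [glue_leftG_rightG]
          _ ≤ hammingDist (rightG m a) c' := hamming_glue_right m _ _ _
          _ ≤ d := hdist
      · rw [hval, hval, leftG_glue, rightG_glue]
        have hc' : gameValue m c' = false := by
          rw [hv.2] at hne; simpa using hne
        simp [hc', hv.1, hv.2]
  · rintro ⟨⟨hnfL, hvL⟩, hnfR, hvR⟩
    have hv : gameValue (m + 1) a = true := by rw [hval, hvL, hvR]; rfl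
    refine ⟨?_, hv⟩
    rintro ⟨a', hdist, hne⟩
    rw [hv, hval a'] at hne
    have h' : gameValue m (leftG m a') = false ∨ gameValue m (rightG m a') = false := by
      by_cases h : gameValue m (leftG m a') = false
      · exact Or.inl h
      · refine Or.inr ?_
        rw [Bool.not_eq_false] at h
        by_contra h2
        rw [Bool.not_eq_false] at h2
        exact hne (by simp [h, h2])
    rcases h' with h' | h'
    · exact hnfL ⟨leftG m a', le_trans (hamming_leftG m a a') hdist, by rw [h', hvL]; simp⟩
    · exact hnfR ⟨rightG m a', le_trans (hamming_rightG m a a') hdist, by rw [h', hvR]; simp⟩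

lemma even_case (m d : ℕ) (hm : ¬ (m + 1) % 2 = 1) (a : Fin (2 ^ (m + 1)) → Bool) :
    (¬ Fragile (m + 1) d a ∧ gameValue (m + 1) a = false) ↔
      ((¬ Fragile m d (leftG m a) ∧ gameValue m (leftG m a) = false) ∧
        (¬ Fragile m d (rightG m a) ∧ gameValue m (rightG m a) = false)) := by
  have hval : ∀ x : Fin (2 ^ (m + 1)) → Bool,
      gameValue (m + 1) x = (gameValue m (leftG m x) || gameValue m (rightG m x)) := by
    intro x; rw [gameValue_succ, if_neg hm]
  constructor
  · rintro ⟨hnf, hv⟩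
    rw [hval, Bool.or_eq_false_iff] at hv
    refine ⟨⟨?_, hv.1⟩, ?_, hv.2⟩
    · rintro ⟨b', hdist, hne⟩
      apply hnf
      refine ⟨glue m b' (rightG m a), ?_, ?_⟩
      · calc hammingDist a (glue m b' (rightG m a))
            = hammingDist (glue m (leftG m a) (rightG m a)) (glue m b' (rightG m a)) := by
              rw [glue_leftG_rightG]
          _ ≤ hammingDist (leftG m a) b' := hamming_glue_left m _ _ _
          _ ≤ d := hdist
      · rw [hval, hval, leftG_glue, rightG_glue]
        have hb' : gameValue m b' = true := by
          rw [hv.1] at hne; simpa using hne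
        simp [hb', hv.1, hv.2]
    · rintro ⟨c', hdist, hne⟩
      apply hnf
      refine ⟨glue m (leftG m a) c', ?_, ?_⟩
      · calc hammingDist a (glue m (leftG m a) c')
            = hammingDist (glue m (leftG m a) (rightG m a)) (glue m (leftG m a) c') := by
              rw [glue_leftG_rightG]
          _ ≤ hammingDist (rightG m a) c' := hamming_glue_right m _ _ _
          _ ≤ d := hdist
      · rw [hval, hval, leftG_glue, rightG_glue]
        have hc' : gameValue m c' = true := by
          rw [hv.2] at hne; simpa using hne
        simp [hc', hv.1, hv.2]
  · rintro ⟨⟨hnfL, hvL⟩, hnfR, hvR⟩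
    have hv : gameValue (m + 1) a = false := by rw [hval, hvL, hvR]; rfl
    refine ⟨?_, hv⟩
    rintro ⟨a', hdist, hne⟩
    rw [hv, hval a'] at hne
    have h' : gameValue m (leftG m a') = true ∨ gameValue m (rightG m a') = true := by
      by_cases h : gameValue m (leftG m a') = true
      · exact Or.inl h
      · refine Or.inr ?_
        rw [Bool.not_eq_true] at h
        by_contra h2
        rw [Bool.not_eq_true] at h2
        exact hne (by simp [h, h2])
    rcases h' with h' | h'
    · exact hnfL ⟨leftG m a', le_trans (hamming_leftG m a a') hdist, by rw [h', hvL]; simp⟩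
    · exact hnfR ⟨rightG m a', le_trans (hamming_rightG m a a') hdist, by rw [h', hvR]; simp⟩

lemma value_odd (m : ℕ) (hm : (m + 1) % 2 = 1) (a : Fin (2 ^ (m + 1)) → Bool) :
    gameValue (m + 1) a = true ↔
      (gameValue m (leftG m a) = true ∧ gameValue m (rightG m a) = true) := by
  rw [gameValue_succ, if_pos hm, Bool.and_eq_true]

lemma value_even (m : ℕ) (hm : ¬ (m + 1) % 2 = 1) (a : Fin (2 ^ (m + 1)) → Bool) :
    gameValue (m + 1) a = false ↔
      (gameValue m (leftG m a) = false ∧ gameValue m (rightG m a) = false) := by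
  rw [gameValue_succ, if_neg hm, Bool.or_eq_false_iff]

lemma alpha_sq (m d : ℕ) (hm : (m + 1) % 2 = 1) :
    alpha (m + 1) d = (alpha m d) ^ 2 := by
  unfold alpha
  have h1 : {a : Fin (2 ^ (m + 1)) → Bool | ¬ Fragile (m + 1) d a ∧ gameValue (m + 1) a = true}
      = {a | leftG m a ∈ {b | ¬ Fragile m d b ∧ gameValue m b = true} ∧
          rightG m a ∈ {b | ¬ Fragile m d b ∧ gameValue m b = true}} := by
    ext a
    simpa [Set.mem_setOf_eq] using odd_case m d hm a
  have h2 : {a : Fin (2 ^ (m + 1)) → Bool | gameValue (m + 1) a = true}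
      = {a | leftG m a ∈ {b | gameValue m b = true} ∧
          rightG m a ∈ {b | gameValue m b = true}} := by
    ext a
    simpa [Set.mem_setOf_eq] using value_odd m hm a
  rw [h1, h2, prob_glue, prob_glue, div_pow, sq, sq]

lemma beta_sq (m d : ℕ) (hm : ¬ (m + 1) % 2 = 1) :
    beta (m + 1) d = (beta m d) ^ 2 := by
  unfold beta
  have h1 : {a : Fin (2 ^ (m + 1)) → Bool | ¬ Fragile (m + 1) d a ∧ gameValue (m + 1) a = false}
      = {a | leftG m a ∈ {b | ¬ Fragile m d b ∧ gameValue m b = false} ∧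
          rightG m a ∈ {b | ¬ Fragile m d b ∧ gameValue m b = false}} := by
    ext a
    simpa [Set.mem_setOf_eq] using even_case m d hm a
  have h2 : {a : Fin (2 ^ (m + 1)) → Bool | gameValue (m + 1) a = false}
      = {a | leftG m a ∈ {b | gameValue m b = false} ∧
          rightG m a ∈ {b | gameValue m b = false}} := by
    ext a
    simpa [Set.mem_setOf_eq] using value_even m hm a
  rw [h1, h2, prob_glue, prob_glue, div_pow, sq, sq]

/-- For every `d ≥ 1` and `n ≥ 1`: `α_{2n−1}(d) = (α_{2n−2}(d))²` and
`β_{2n}(d) = (β_{2n−1}(d))²`. -/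
theorem squaring_recurrences (d : ℕ) (hd : 1 ≤ d) (n : ℕ) (hn : 1 ≤ n) :
    alpha (2 * n - 1) d = (alpha (2 * n - 2) d) ^ 2 ∧
      beta (2 * n) d = (beta (2 * n - 1) d) ^ 2 := by
  obtain ⟨k, rfl⟩ : ∃ k, n = k + 1 := ⟨n - 1, by omega⟩
  have e1 : 2 * (k + 1) - 1 = (2 * k) + 1 := by omega
  have e2 : 2 * (k + 1) - 2 = 2 * k := by omega
  have e3 : 2 * (k + 1) = (2 * k + 1) + 1 := by omega
  rw [e1, e2, e3]
  constructor
  · exact alpha_sq (2 * k) d (by omega)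
  · exact beta_sq (2 * k + 1) d (by omega)
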